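/- For t ∈ ℂ, let p_t : ℂ → ℂ be the quadratic polynomial p_t(z) = z² + t, and let p_t^{∘n} denote its n-th iterate. There is no t ∈ ℂ such that both forward orbits {p_t^{∘n}(0) : n ≥ 0} and {p_t^{∘n}(4) : n ≥ 0} are bounded; that is, for every t ∈ ℂ at least one of the two orbits is unbounded. -/

import Mathlib

private lemma abs_step_ge (t z : ℂ) :
    ‖z‖ ^ 2 - ‖t‖ ≤ ‖z ^ 2 + t‖ := by
  have h1 : ‖z ^ 2‖ ≤ ‖z ^ 2 + t‖ + ‖t‖ := by
    have h := norm_add_le (z ^ 2 + t) (-t)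
    rw [add_neg_cancel_right, norm_neg] at h
    exact h
  have h2 : ‖z ^ 2‖ = ‖z‖ ^ 2 := by
    simp [map_pow]
  linarith [h1, h2.symm.le, h2.le]

/-- For no parameter `t ∈ ℂ` are both forward orbits of `0` and of `4` under
`p_t(z) = z² + t` bounded. -/
theorem no_common_bounded_orbit (t : ℂ) :
    ¬ ((∃ M : ℝ, 0 ≤ M ∧ ∀ n : ℕ, ‖(fun z => z ^ 2 + t)^[n] 0‖ ≤ M) ∧
       (∃ M : ℝ, 0 ≤ M ∧ ∀ n : ℕ, ‖(fun z => z ^ 2 + t)^[n] 4‖ ≤ M)) := by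
  rintro ⟨⟨M1, hM1, h1⟩, ⟨M2, hM2, h2⟩⟩
  set f : ℂ → ℂ := fun z => z ^ 2 + t with hf
  set A : ℝ := ‖t‖ with hA
  -- Step 1: |t| ≤ 2
  have hAle : A ≤ 2 := by
    by_contra hgt
    push_neg at hgt
    have hA1 : (1 : ℝ) < A - 1 := by linarith
    have grow : ∀ n : ℕ, A * (A - 1) ^ n ≤ ‖f^[n + 1] 0‖ := by
      intro n
      induction n with
      | zero => simp [f, Function.iterate_one, A]
      | succ n ih =>
        have hPn : (1 : ℝ) ≤ (A - 1) ^ n := one_le_pow₀ (by linarith)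
        have hzabs : (0 : ℝ) ≤ ‖f^[n + 1] 0‖ := norm_nonneg _
        have hstep := abs_step_ge t (f^[n + 1] 0)
        have hiter : f^[n + 2] 0 = (f^[n + 1] 0) ^ 2 + t := by
          rw [show n + 2 = (n + 1) + 1 by ring, Function.iterate_succ_apply']
        rw [hiter]
        have hAt : (0 : ℝ) ≤ A := norm_nonneg t
        rw [← hA] at hstep
        have hz2 : (A * (A - 1) ^ n) ^ 2 ≤ ‖f^[n + 1] 0‖ ^ 2 :=
          pow_le_pow_left₀ (by nlinarith) ih 2
        rw [pow_succ]
        have haux : 0 ≤ A * (A - 1) ^ n * ((A - 1) ^ n - 1) :=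
          mul_nonneg (mul_nonneg hAt (by linarith)) (by linarith)
        nlinarith [hstep, hz2, hPn, hgt, haux]
    obtain ⟨n, hn⟩ := pow_unbounded_of_one_lt M1 hA1
    have := grow n
    have := h1 (n + 1)
    nlinarith [this, grow n, hn, hM1]
  -- Step 2: orbit of 4 grows
  have grow4 : ∀ n : ℕ, 4 * 2 ^ n ≤ ‖f^[n] 4‖ := by
    intro n
    induction n with
    | zero => norm_num [f]
    | succ n ih =>
      have h2n : (1 : ℝ) ≤ 2 ^ n := one_le_pow₀ one_le_two
      have hstep := abs_step_ge t (f^[n] 4)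
      have hiter : f^[n + 1] 4 = (f^[n] 4) ^ 2 + t := Function.iterate_succ_apply' f n 4
      rw [hiter]
      have hzabs : (0 : ℝ) ≤ ‖f^[n] 4‖ := norm_nonneg _
      rw [← hA] at hstep
      have hz2 : ((4 : ℝ) * 2 ^ n) ^ 2 ≤ ‖f^[n] 4‖ ^ 2 :=
        pow_le_pow_left₀ (by positivity) ih 2
      rw [pow_succ]
      nlinarith [hstep, hz2, h2n, hAle, sq_nonneg ((2:ℝ) ^ n - 1)]
  obtain ⟨n, hn⟩ := pow_unbounded_of_one_lt M2 (one_lt_two (α := ℝ))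
  have := h2 n
  nlinarith [grow4 n, hn, this]
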